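/- Let X be a complex Banach space. Then i_X(X)^⊥ (the annihilator of i_X(X) in X***) is an L-summand in X*** if and only if the canonical projection π_{X*} : X*** → X*** is an L-projection. -/

import Mathlib

open NormedSpace

noncomputable section

set_option maxHeartbeats 1000000

instance StrongDual.instAddCommGroupComplex {E : Type*} [SeminormedAddCommGroup E]
    [NormedSpace ℂ E] : AddCommGroup (StrongDual ℂ E) :=
  ContinuousLinearMap.addCommGroup

instance StrongDual.instSeminormedAddCommGroupComplex {E : Type*} [SeminormedAddCommGroup E]
    [NormedSpace ℂ E] : SeminormedAddCommGroup (StrongDual ℂ E) :=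
  ContinuousLinearMap.toSeminormedAddCommGroup

instance StrongDual.instNormedSpaceComplex {E : Type*} [SeminormedAddCommGroup E]
    [NormedSpace ℂ E] : NormedSpace ℂ (StrongDual ℂ E) :=
  ContinuousLinearMap.toNormedSpace

/-- The transpose (dual map) of a continuous linear map between (semi)normed spaces:
`ctranspose f` sends a functional `g` to `g ∘ f`. -/
def ctranspose {E F : Type*} [SeminormedAddCommGroup E] [NormedSpace ℂ E]
    [SeminormedAddCommGroup F] [NormedSpace ℂ F] (f : E →L[ℂ] F) :
    StrongDual ℂ F →L[ℂ] StrongDual ℂ E :=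
  (ContinuousLinearMap.compL ℂ E F ℂ).flip f

/-- A bounded linear projection `P` is an L-projection if `‖z‖ = ‖P z‖ + ‖z - P z‖`
for all `z`. -/
def IsLProjection {Z : Type*} [SeminormedAddCommGroup Z] [NormedSpace ℂ Z]
    (P : Z →L[ℂ] Z) : Prop :=
  (∀ z, P (P z) = P z) ∧ ∀ z, ‖z‖ = ‖P z‖ + ‖z - P z‖

lemma ctranspose_apply {E F : Type*} [SeminormedAddCommGroup E] [NormedSpace ℂ E]
    [SeminormedAddCommGroup F] [NormedSpace ℂ F] (f : E →L[ℂ] F) (g : StrongDual ℂ F) (x : E) :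
    ctranspose f g x = g (f x) := rfl

/-- For a complex Banach space `X`, the annihilator `i_X(X)^⊥` in `X***` is an
L-summand if and only if the canonical projection `π_{X*} = i_{X*} ∘ (i_X)^t` on `X***` is an
L-projection. -/
theorem annihilator_lsummand_iff_canonical_projection_is_lprojection
    (X : Type*) [NormedAddCommGroup X] [NormedSpace ℂ X] [CompleteSpace X] :
    (∃ P : StrongDual ℂ (StrongDual ℂ (StrongDual ℂ X)) →L[ℂ] StrongDual ℂ (StrongDual ℂ (StrongDual ℂ X)),
        IsLProjection (Z := StrongDual ℂ (StrongDual ℂ (StrongDual ℂ X))) P ∧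
        Set.range P = {φ : StrongDual ℂ (StrongDual ℂ (StrongDual ℂ X)) |
          ∀ x : X, φ (inclusionInDoubleDual ℂ X x) = 0}) ↔
      IsLProjection ((inclusionInDoubleDual ℂ (StrongDual ℂ X)) ∘L
        ctranspose (E := X) (F := StrongDual ℂ (StrongDual ℂ X)) (inclusionInDoubleDual ℂ X)) := by
  set i := inclusionInDoubleDual ℂ X with hi
  set j := inclusionInDoubleDual ℂ (StrongDual ℂ X) with hj
  set t := ctranspose (E := X) (F := StrongDual ℂ (StrongDual ℂ X)) i with ht
  set π : StrongDual ℂ (StrongDual ℂ (StrongDual ℂ X)) →L[ℂ] StrongDual ℂ (StrongDual ℂ (StrongDual ℂ X)) := j ∘L t with hπ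
  -- basic facts
  have htj : ∀ f : StrongDual ℂ X, t (j f) = f := by
    intro f; ext x
    simp [ht, ctranspose_apply, hj, hi, dual_def]
  have hidem : ∀ z, π (π z) = π z := by
    intro z
    simp only [hπ, ContinuousLinearMap.comp_apply]
    rw [htj]
  have hπapp : ∀ z x, (π z) (i x) = z (i x) := by
    intro z x; rfl
  have hker : ∀ z : StrongDual ℂ (StrongDual ℂ (StrongDual ℂ X)), (∀ x, z (i x) = 0) ↔ π z = 0 := by
    intro z
    constructor
    · intro h
      have : t z = 0 := by ext x; exact h x
      simp [hπ, this]
    · intro h x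
      rw [← hπapp z x, h]; rfl
  have hπnorm : ∀ z, ‖π z‖ ≤ ‖z‖ := by
    intro z
    have h1 : ‖π z‖ = ‖t z‖ := by
      simp only [hπ, ContinuousLinearMap.comp_apply]
      exact (inclusionInDoubleDualLi ℂ (E := StrongDual ℂ X)).norm_map (t z)
    rw [h1]
    calc ‖t z‖ ≤ ‖z ∘L i‖ := le_of_eq rfl
      _ ≤ ‖z‖ * ‖i‖ := ContinuousLinearMap.opNorm_comp_le _ _
      _ ≤ ‖z‖ * 1 := by
          gcongr
          exact inclusionInDoubleDual_norm_le ℂ X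
      _ = ‖z‖ := mul_one _
  constructor
  · rintro ⟨P, ⟨hP2, hPn⟩, hrange⟩
    -- key: π z = z - P z
    have key : ∀ z, π z = z - P z := by
      intro z
      have hPz0 : π (P z) = 0 := by
        rw [← hker]
        intro x
        have : P z ∈ Set.range P := ⟨z, rfl⟩
        rw [hrange] at this
        exact this x
      set y := z - P z with hy
      have hPy : P y = 0 := (map_sub P z (P z)).trans (by rw [hP2]; exact sub_self _)
      have hπz : π z = π y := by
        have := map_sub π z (P z)
        rw [hPz0] at this
        exact (this.trans (sub_zero (π z))).symm
      -- show π y = y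
      have hq : π (y - π y) = 0 := (map_sub π y (π y)).trans (by rw [hidem]; exact sub_self _)
      have hw : y - π y ∈ Set.range P := by
        rw [hrange]; intro x; rw [← hπapp _ x, hq]; rfl
      obtain ⟨u, hu⟩ := hw
      have hPw : P (y - π y) = y - π y := by rw [← hu, hP2]
      have hPπy : P (π y) = -(y - π y) := by
        have e : y - (y - π y) = π y := by abel
        calc P (π y) = P (y - (y - π y)) := by rw [e]
          _ = P y - P (y - π y) := map_sub P _ _
          _ = -(y - π y) := by rw [hPy, hPw]; abel
      have e1 : π y - P (π y) = y := by rw [hPπy]; abel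
      have hn : ‖π y‖ = ‖y - π y‖ + ‖y‖ := by
        have e2 : π y - -(y - π y) = y := by abel
        rw [hPn (π y), hPπy, show ‖-(y - π y)‖ = ‖y - π y‖ from norm_neg (y - π y), e2]
      have hz0 : ‖y - π y‖ = 0 := by
        have := hπnorm y
        have := norm_nonneg (y - π y)
        linarith
      have hyy : π y = y := by
        ext g
        have hb := (y - π y).le_opNorm g
        rw [hz0, zero_mul] at hb
        have h0 : (y - π y) g = 0 := norm_le_zero_iff.mp hb
        rw [ContinuousLinearMap.sub_apply] at h0
        exact (sub_eq_zero.mp h0).symm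
      rw [hπz, hyy]
    refine ⟨hidem, ?_⟩
    intro z
    rw [key z]
    have e : z - (z - P z) = P z := by abel
    rw [e]
    linarith [hPn z]
  · rintro ⟨h1, h2⟩
    have hT : IsTopologicalAddGroup (StrongDual ℂ (StrongDual ℂ (StrongDual ℂ X))) :=
      SeminormedAddCommGroup.toIsTopologicalAddGroup (E := StrongDual ℂ (StrongDual ℂ (StrongDual ℂ X)))
    letI : Sub (StrongDual ℂ (StrongDual ℂ (StrongDual ℂ X)) →L[ℂ] StrongDual ℂ (StrongDual ℂ (StrongDual ℂ X))) := by
      exact ContinuousLinearMap.sub (R := ℂ) (R₂ := ℂ) (M := StrongDual ℂ (StrongDual ℂ (StrongDual ℂ X))) (M₂ := StrongDual ℂ (StrongDual ℂ (StrongDual ℂ X))) (σ₁₂ := RingHom.id ℂ)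
    have hPapp : ∀ z, (ContinuousLinearMap.id ℂ (StrongDual ℂ (StrongDual ℂ (StrongDual ℂ X))) - π) z = z - π z := fun z => rfl
    have hπsub : ∀ a b : StrongDual ℂ (StrongDual ℂ (StrongDual ℂ X)), π (a - b) = π a - π b := fun a b => by exact map_sub π a b
    refine ⟨ContinuousLinearMap.id ℂ (StrongDual ℂ (StrongDual ℂ (StrongDual ℂ X))) - π, ⟨?_, ?_⟩, ?_⟩
    · intro z
      simp only [ContinuousLinearMap.sub_apply, ContinuousLinearMap.id_apply, hPapp, hπsub, map_sub, h1]
      abel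
    · intro z
      have := h2 z
      simp only [ContinuousLinearMap.sub_apply, ContinuousLinearMap.id_apply, hPapp]
      rw [this]
      rw [show z - (z - π z) = π z from sub_sub_cancel z (π z)]
      ring
    · ext z
      simp only [Set.mem_range, Set.mem_setOf_eq]
      constructor
      · rintro ⟨w, rfl⟩
        intro x
        simp only [ContinuousLinearMap.sub_apply, ContinuousLinearMap.id_apply, hPapp]
        rw [hπapp w x]
        exact sub_self _
      · intro h
        refine ⟨z, ?_⟩
        have : π z = 0 := (hker z).mp h
        simp [hPapp, this, show z - 0 = z from sub_zero z]
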